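/- arXiv:1703.09523 — 2 statements merged into one kernel-verified Lean document; each statement's English description precedes it below -/
import Mathlib

section
/- Let L be a ℤ/2-Mackey functor consisting of abelian groups L(ℤ/2) and L(*), an involution w on L(ℤ/2), a restriction R: L(*) → L(ℤ/2) and transfer T: L(ℤ/2) → L(*) with R∘T(a) = a + w(a). Suppose L(ℤ/2) and L(*) are commutative rings, R is a ring map, and there is a multiplicative norm N: L(ℤ/2) → L(*) satisfying: (i) T(a)·b = T(a·R(b)), (ii) R(N(a)) = a·w(a), (iii) N(a+a') = N(a) + N(a') + T(a·w(a')) and N(0) = 0 (i.e., L is a Tambara functor). Define an action of L(ℤ/2) on L(*) by a•b := N(a)·b. Then this action makes L a Hermitian Mackey functor, i.e., it satisfies: (1) w(a·a') = w(a')·w(a) and w(1) = 1; (2) R(a•b) = a·R(b)·w(a); (3) a•T(c) = T(a·c·w(a)); (4) (a+a')•b = a•b + a'•b + T(a·R(b)·w(a')) and 0•b = 0. -/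
/-- A ℤ/2-Tambara functor, with the action `a • b := N a * b`,
is a Hermitian Mackey functor. -/
theorem tambara_to_hermitian
    {U F : Type} [CommRing U] [CommRing F]
    (w : U →+* U) (hw2 : ∀ a : U, w (w a) = a)
    (R : F →+* U) (hRw : ∀ b : F, w (R b) = R b)
    (T : U →+ F) (hTw : ∀ a : U, T (w a) = T a)
    (hRT : ∀ a : U, R (T a) = a + w a)
    (N : U → F)
    (hNw : ∀ a : U, N (w a) = N a)
    (hNmul : ∀ a a' : U, N (a * a') = N a * N a')
    (hN1 : N 1 = 1)
    (hFrob : ∀ (a : U) (b : F), T a * b = T (a * R b))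
    (hRN : ∀ a : U, R (N a) = a * w a)
    (hNadd : ∀ a a' : U, N (a + a') = N a + N a' + T (a * w a'))
    (hN0 : N 0 = 0) :
    -- (1) w is an anti-involution of the ring U
    ((∀ a a' : U, w (a * a') = w a' * w a) ∧ w (1 : U) = 1) ∧
    -- (2) R(a • b) = a · R(b) · w(a)
    (∀ (a : U) (b : F), R (N a * b) = a * R b * w a) ∧
    -- (3) a • T(c) = T(a · c · w(a))
    (∀ a c : U, N a * T c = T (a * c * w a)) ∧
    -- (4) distributivity and 0 • b = 0
    ((∀ (a a' : U) (b : F),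
        N (a + a') * b = N a * b + N a' * b + T (a * R b * w a')) ∧
      ∀ b : F, N 0 * b = 0) ∧
    -- the action is multiplicative and unital
    (∀ (a a' : U) (b : F), N (a * a') * b = N a * (N a' * b)) ∧
    (∀ b : F, N 1 * b = b) := by
  refine ⟨⟨fun a a' => by rw [map_mul, mul_comm], map_one w⟩, ?_, ?_, ⟨?_, ?_⟩, ?_, ?_⟩
  · intro a b
    rw [map_mul, hRN]; ring
  · intro a c
    rw [mul_comm, hFrob, hRN]
    congr 1; ring
  · intro a a' b
    rw [hNadd, add_mul, add_mul, hFrob]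
    congr 1; ring
  · intro b; rw [hN0, zero_mul]
  · intro a a' b; rw [hNmul, mul_assoc]
  · intro b; rw [hN1, one_mul]
end

section
/- Let L be a Hermitian Mackey functor. The action of Mₙ(L(ℤ/2)) on Mₙ(L)(*) defined by (A•B)ᵢⱼ = (A·R(B)·w(A))ᵢⱼ for i<j and (A•B)ᵢᵢ = T(Σ_{k<l} Aᵢₖ R(B)ₖₗ w(Aᵢₗ)) + Σₖ Aᵢₖ•Bₖₖ is associative: (AC)•B = A•(C•B) for all A, C ∈ Mₙ(L(ℤ/2)) and B ∈ Mₙ(L)(*). -/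
/-- A Hermitian ℤ/2-Mackey functor: a ring `U = L(ℤ/2)` with anti-involution `w`,
an abelian group `F = L(*)`, restriction `R`, transfer `T` with `R (T a) = a + w a`,
and a multiplicative left action `act` of `U` on `F`. -/
structure HermitianMackey (U F : Type) [Ring U] [AddCommGroup F] where
  w : U → U
  w_add : ∀ a a' : U, w (a + a') = w a + w a'
  w_invol : ∀ a : U, w (w a) = a
  w_mul : ∀ a a' : U, w (a * a') = w a' * w a
  w_one : w 1 = 1
  R : F → U
  R_add : ∀ b b' : F, R (b + b') = R b + R b'
  R_equiv : ∀ b : F, w (R b) = R b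
  T : U → F
  T_add : ∀ a a' : U, T (a + a') = T a + T a'
  T_equiv : ∀ a : U, T (w a) = T a
  RT : ∀ a : U, R (T a) = a + w a
  act : U → F → F
  act_add : ∀ (a : U) (b b' : F), act a (b + b') = act a b + act a b'
  act_mul : ∀ (a a' : U) (b : F), act (a * a') b = act a (act a' b)
  act_one : ∀ b : F, act 1 b = b
  R_act : ∀ (a : U) (b : F), R (act a b) = a * R b * w a
  act_T : ∀ a c : U, act a (T c) = T (a * c * w a)
  add_act : ∀ (a a' : U) (b : F),
    act (a + a') b = act a b + act a' b + T (a * R b * w a')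
  zero_act : ∀ b : F, act 0 b = 0

variable {U F : Type} [Ring U] [AddCommGroup F]

/-- The conjugate transpose `w(A)ᵢⱼ = w(Aⱼᵢ)`, the anti-involution of `Mₙ(L)(ℤ/2)`. -/
def conjT (L : HermitianMackey U F) {n : ℕ} (A : Matrix (Fin n) (Fin n) U) :
    Matrix (Fin n) (Fin n) U :=
  Matrix.of fun i j => L.w (A j i)

/-- The restriction `R : Mₙ(L)(*) → Mₙ(L(ℤ/2))`. An element of `Mₙ(L)(*)` is
recorded as a pair `(Boff, Bdiag)`: the entries `Boff i j` for `i < j` lie in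
`L(ℤ/2)` and the diagonal entries `Bdiag i` lie in `L(*)`; the restriction fills
in the lower entries via the involution `w`. -/
def mRest (L : HermitianMackey U F) {n : ℕ}
    (Boff : Fin n → Fin n → U) (Bdiag : Fin n → F) :
    Matrix (Fin n) (Fin n) U :=
  Matrix.of fun i j =>
    if i < j then Boff i j else if j < i then L.w (Boff j i) else L.R (Bdiag i)

/-- Off-diagonal part of the matrix transfer `T : Mₙ(L(ℤ/2)) → Mₙ(L)(*)`:
`T(A)ᵢⱼ = Aᵢⱼ + w(Aⱼᵢ)` for `i < j`. -/
def mTransOff (L : HermitianMackey U F) {n : ℕ} (A : Matrix (Fin n) (Fin n) U) :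
    Fin n → Fin n → U :=
  fun i j => A i j + L.w (A j i)

/-- Diagonal part of the matrix transfer: `T(A)ᵢᵢ = T(Aᵢᵢ)`. -/
def mTransDiag (L : HermitianMackey U F) {n : ℕ} (A : Matrix (Fin n) (Fin n) U) :
    Fin n → F :=
  fun i => L.T (A i i)

/-- Off-diagonal part of the action of `Mₙ(L(ℤ/2))` on `Mₙ(L)(*)`:
`(A • B)ᵢⱼ = (A · R(B) · w(A))ᵢⱼ` for `i < j`. -/
def mActOff (L : HermitianMackey U F) {n : ℕ} (A : Matrix (Fin n) (Fin n) U)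
    (Boff : Fin n → Fin n → U) (Bdiag : Fin n → F) : Fin n → Fin n → U :=
  fun i j => (A * mRest L Boff Bdiag * conjT L A) i j

/-- Diagonal part of the action of `Mₙ(L(ℤ/2))` on `Mₙ(L)(*)`:
`(A • B)ᵢᵢ = T(Σ_{k<l} Aᵢₖ · R(B)ₖₗ · w(Aᵢₗ)) + Σₖ Aᵢₖ • Bₖₖ`. -/
def mActDiag (L : HermitianMackey U F) {n : ℕ} (A : Matrix (Fin n) (Fin n) U)
    (Boff : Fin n → Fin n → U) (Bdiag : Fin n → F) : Fin n → F :=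
  fun i =>
    (∑ k : Fin n, ∑ l : Fin n,
        if k < l then L.T (A i k * mRest L Boff Bdiag k l * L.w (A i l)) else 0)
      + ∑ k : Fin n, L.act (A i k) (Bdiag k)

section Helpers

variable (L : HermitianMackey U F)

lemma w_zero : L.w 0 = 0 := by
  have := L.w_add 0 0; simpa using this.symm

lemma T_zero : L.T 0 = 0 := by
  have h : L.T 0 + L.T 0 = L.T 0 + 0 := by simpa using (L.T_add 0 0).symm
  exact add_left_cancel h

lemma R_zero : L.R 0 = 0 := by
  have h : L.R 0 + L.R 0 = L.R 0 + 0 := by simpa using (L.R_add 0 0).symm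
  exact add_left_cancel h

lemma act_zero (a : U) : L.act a 0 = 0 := by
  have h : L.act a 0 + L.act a 0 = L.act a 0 + 0 := by simpa using (L.act_add a 0 0).symm
  exact add_left_cancel h

lemma w_sum {ι : Type} (s : Finset ι) (f : ι → U) :
    L.w (∑ x ∈ s, f x) = ∑ x ∈ s, L.w (f x) :=
  map_sum (AddMonoidHom.mk' L.w L.w_add) f s

lemma T_sum {ι : Type} (s : Finset ι) (f : ι → U) :
    L.T (∑ x ∈ s, f x) = ∑ x ∈ s, L.T (f x) :=
  map_sum (AddMonoidHom.mk' L.T L.T_add) f s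

lemma R_sum {ι : Type} (s : Finset ι) (f : ι → F) :
    L.R (∑ x ∈ s, f x) = ∑ x ∈ s, L.R (f x) :=
  map_sum (AddMonoidHom.mk' L.R L.R_add) f s

lemma act_sum {ι : Type} (a : U) (s : Finset ι) (f : ι → F) :
    L.act a (∑ x ∈ s, f x) = ∑ x ∈ s, L.act a (f x) :=
  map_sum (AddMonoidHom.mk' (L.act a) (L.act_add a)) f s

lemma T_flip (x u v : U) : L.T (u * x * L.w v) = L.T (v * L.w x * L.w u) := by
  rw [← L.T_equiv (u * x * L.w v)]
  congr 1
  rw [L.w_mul, L.w_mul, L.w_invol, mul_assoc]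

end Helpers
section Helpers2

variable (L : HermitianMackey U F) {n : ℕ}

lemma mRest_lt (Boff : Fin n → Fin n → U) (Bdiag : Fin n → F) {i j : Fin n} (h : i < j) :
    mRest L Boff Bdiag i j = Boff i j := by simp [mRest, h]

lemma mRest_gt (Boff : Fin n → Fin n → U) (Bdiag : Fin n → F) {i j : Fin n} (h : j < i) :
    mRest L Boff Bdiag i j = L.w (Boff j i) := by simp [mRest, h, h.not_gt]

lemma mRest_diag (Boff : Fin n → Fin n → U) (Bdiag : Fin n → F) (i : Fin n) :
    mRest L Boff Bdiag i i = L.R (Bdiag i) := by simp [mRest]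

lemma mRest_symm (Boff : Fin n → Fin n → U) (Bdiag : Fin n → F) (k l : Fin n) :
    L.w (mRest L Boff Bdiag k l) = mRest L Boff Bdiag l k := by
  rcases lt_trichotomy k l with h | h | h
  · rw [mRest_lt L Boff Bdiag h, mRest_gt L Boff Bdiag h]
  · subst h; rw [mRest_diag, L.R_equiv]
  · rw [mRest_gt L Boff Bdiag h, mRest_lt L Boff Bdiag h, L.w_invol]

lemma conjT_apply (A : Matrix (Fin n) (Fin n) U) (i j : Fin n) :
    conjT L A i j = L.w (A j i) := rfl

lemma conjT_mul (A B : Matrix (Fin n) (Fin n) U) :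
    conjT L (A * B) = conjT L B * conjT L A := by
  ext i j
  simp only [conjT_apply, Matrix.mul_apply]
  rw [w_sum]
  congr 1; funext k
  rw [L.w_mul]

lemma herm_sandwich (A : Matrix (Fin n) (Fin n) U)
    (Boff : Fin n → Fin n → U) (Bdiag : Fin n → F) :
    conjT L (A * mRest L Boff Bdiag * conjT L A)
      = A * mRest L Boff Bdiag * conjT L A := by
  have hR : conjT L (mRest L Boff Bdiag) = mRest L Boff Bdiag := by
    ext i j; simp [conjT_apply, mRest_symm]
  have hA : conjT L (conjT L A) = A := by
    ext i j; simp [conjT_apply, L.w_invol]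
  rw [conjT_mul, conjT_mul, hR, hA, mul_assoc]

lemma sandwich_entry (A : Matrix (Fin n) (Fin n) U)
    (M : Matrix (Fin n) (Fin n) U) (i j : Fin n) :
    (A * M * conjT L A) i j
      = ∑ k : Fin n, ∑ l : Fin n, A i k * M k l * L.w (A j l) := by
  calc (A * M * conjT L A) i j = ∑ l : Fin n, (A * M) i l * L.w (A j l) := by
        rw [Matrix.mul_apply]; rfl
    _ = ∑ l : Fin n, ∑ k : Fin n, A i k * M k l * L.w (A j l) := by
        congr 1; funext l
        rw [Matrix.mul_apply, Finset.sum_mul]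
    _ = ∑ k : Fin n, ∑ l : Fin n, A i k * M k l * L.w (A j l) := Finset.sum_comm

/-- The restriction of `A • B` is `A · R(B) · w(A)`. -/
lemma restAct (A : Matrix (Fin n) (Fin n) U)
    (Boff : Fin n → Fin n → U) (Bdiag : Fin n → F) :
    mRest L (mActOff L A Boff Bdiag) (mActDiag L A Boff Bdiag)
      = A * mRest L Boff Bdiag * conjT L A := by
  ext i j
  rcases lt_trichotomy i j with h | h | h
  · rw [mRest_lt L _ _ h]; rfl
  · subst h
    rw [mRest_diag, sandwich_entry]
    have hRB : L.R (mActDiag L A Boff Bdiag i)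
        = (∑ k : Fin n, ∑ l : Fin n, if k < l then
            L.R (L.T (A i k * mRest L Boff Bdiag k l * L.w (A i l))) else 0)
          + ∑ k : Fin n, L.R (L.act (A i k) (Bdiag k)) := by
      show L.R ((∑ k : Fin n, ∑ l : Fin n, if k < l then
            L.T (A i k * mRest L Boff Bdiag k l * L.w (A i l)) else 0)
          + ∑ k : Fin n, L.act (A i k) (Bdiag k)) = _
      rw [L.R_add]
      simp only [R_sum, apply_ite L.R, R_zero]
    rw [hRB]
    have split : ∀ k l : Fin n, A i k * mRest L Boff Bdiag k l * L.w (A i l)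
        = (if k < l then A i k * mRest L Boff Bdiag k l * L.w (A i l) else 0)
          + (if l < k then A i k * mRest L Boff Bdiag k l * L.w (A i l) else 0)
          + (if k = l then A i k * mRest L Boff Bdiag k l * L.w (A i l) else 0) := by
      intro k l
      rcases lt_trichotomy k l with h | h | h
      · simp [h, h.not_gt, h.ne]
      · simp [h, lt_irrefl]
      · simp [h, h.not_gt, h.ne']
    calc (∑ k : Fin n, ∑ l : Fin n,
            if k < l then L.R (L.T (A i k * mRest L Boff Bdiag k l * L.w (A i l))) else 0)
          + ∑ k : Fin n, L.R (L.act (A i k) (Bdiag k))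
        = (∑ k : Fin n, ∑ l : Fin n, if k < l then
              (A i k * mRest L Boff Bdiag k l * L.w (A i l)
                + L.w (A i k * mRest L Boff Bdiag k l * L.w (A i l))) else 0)
          + ∑ k : Fin n, A i k * mRest L Boff Bdiag k k * L.w (A i k) := by
          congr 1
          · congr 1; funext k; congr 1; funext l
            rw [L.RT]
          · congr 1; funext k
            rw [L.R_act, mRest_diag]
      _ = ∑ k : Fin n, ∑ l : Fin n, A i k * mRest L Boff Bdiag k l * L.w (A i l) := by
          conv_rhs => rw [Finset.sum_congr rfl
            (fun k _ => Finset.sum_congr rfl (fun l _ => split k l))]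
          simp only [Finset.sum_add_distrib]
          have diag : ∀ k : Fin n, (∑ l : Fin n, if k = l then
              A i k * mRest L Boff Bdiag k l * L.w (A i l) else 0)
              = A i k * mRest L Boff Bdiag k k * L.w (A i k) := by
            intro k; rw [Finset.sum_ite_eq]; simp
          have flip : (∑ k : Fin n, ∑ l : Fin n, if l < k then
                A i k * mRest L Boff Bdiag k l * L.w (A i l) else 0)
              = ∑ k : Fin n, ∑ l : Fin n, if k < l then
                L.w (A i k * mRest L Boff Bdiag k l * L.w (A i l)) else 0 := by
            rw [Finset.sum_comm]
            congr 1; funext k; congr 1; funext l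
            rcases lt_or_ge k l with h | h
            · simp only [h, if_true]
              rw [L.w_mul, L.w_mul, L.w_invol, mRest_symm, mul_assoc]
            · simp [not_lt.mpr h]
          rw [flip]
          rw [Finset.sum_congr rfl (fun k _ => diag k)]
          have comb : (∑ k : Fin n, ∑ l : Fin n, if k < l then
                (A i k * mRest L Boff Bdiag k l * L.w (A i l)
                  + L.w (A i k * mRest L Boff Bdiag k l * L.w (A i l))) else 0)
              = (∑ k : Fin n, ∑ l : Fin n, if k < l then
                  A i k * mRest L Boff Bdiag k l * L.w (A i l) else 0)
                + ∑ k : Fin n, ∑ l : Fin n, if k < l then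
                  L.w (A i k * mRest L Boff Bdiag k l * L.w (A i l)) else 0 := by
            rw [← Finset.sum_add_distrib]
            congr 1; funext k
            rw [← Finset.sum_add_distrib]
            congr 1; funext l
            split <;> simp
          rw [comb]
  · rw [mRest_gt L _ _ h]
    have hs := congrFun (congrFun (herm_sandwich L A Boff Bdiag) i) j
    calc L.w (mActOff L A Boff Bdiag j i)
        = conjT L (A * mRest L Boff Bdiag * conjT L A) i j := rfl
      _ = (A * mRest L Boff Bdiag * conjT L A) i j := hs

end Helpers2
section Helpers3

variable (L : HermitianMackey U F) {n : ℕ}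

/-- Symmetric pair sums over `cons`. -/
lemma pair_cons {ι : Type} [LinearOrder ι] (s : Finset ι) (x : ι) (hx : x ∉ s)
    (t : ι → ι → F) (tsymm : ∀ k l, t k l = t l k) :
    (∑ k ∈ Finset.cons x s hx, ∑ l ∈ Finset.cons x s hx, if k < l then t k l else 0)
      = (∑ k ∈ s, ∑ l ∈ s, if k < l then t k l else 0) + ∑ h ∈ s, t x h := by
  rw [Finset.sum_cons]
  rw [Finset.sum_cons]
  have h2 : (∑ k ∈ s, ∑ l ∈ Finset.cons x s hx, if k < l then t k l else 0)
      = ∑ k ∈ s, ((if k < x then t k x else 0) + ∑ l ∈ s, if k < l then t k l else 0) :=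
    Finset.sum_congr rfl (fun k _ => Finset.sum_cons _)
  rw [h2, Finset.sum_add_distrib]
  have h3 : (∑ l ∈ s, if x < l then t x l else 0) + (∑ k ∈ s, if k < x then t k x else 0)
      = ∑ h ∈ s, t x h := by
    rw [← Finset.sum_add_distrib]
    refine Finset.sum_congr rfl fun h hh => ?_
    have hne : h ≠ x := fun e => hx (e ▸ hh)
    rcases lt_trichotomy x h with hlt | heq | hgt
    · simp [hlt, hlt.not_gt]
    · exact absurd heq.symm hne
    · simp [hgt, hgt.not_gt, tsymm x h]
  simp only [lt_irrefl, if_false, zero_add]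
  rw [← h3]; abel

/-- Generalized distributivity: `(Σ aₕ) • b = Σ (aₕ • b) + Σ_{k<l} T(aₖ R(b) w(aₗ))`. -/
lemma genDist {ι : Type} [LinearOrder ι] (s : Finset ι) (a : ι → U) (b : F) :
    L.act (∑ h ∈ s, a h) b
      = (∑ h ∈ s, L.act (a h) b)
        + ∑ k ∈ s, ∑ l ∈ s, if k < l then L.T (a k * L.R b * L.w (a l)) else 0 := by
  induction s using Finset.cons_induction with
  | empty => simp [L.zero_act]
  | cons x s hx ih =>
    have tsymm : ∀ k l : ι, L.T (a k * L.R b * L.w (a l)) = L.T (a l * L.R b * L.w (a k)) := by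
      intro k l; rw [T_flip, L.R_equiv]
    rw [Finset.sum_cons, L.add_act, ih,
      pair_cons s x hx (fun k l => L.T (a k * L.R b * L.w (a l))) tsymm,
      Finset.sum_cons]
    have cross : L.T (a x * L.R b * L.w (∑ h ∈ s, a h)) = ∑ h ∈ s, L.T (a x * L.R b * L.w (a h)) := by
      rw [w_sum, Finset.mul_sum, T_sum]
    rw [cross]; abel

/-- The reversal equivalence on quadruples. -/
def rev4 {n : ℕ} : (Fin n × Fin n × Fin n × Fin n) ≃ (Fin n × Fin n × Fin n × Fin n) :=
  ⟨fun p => (p.2.2.2, p.2.2.1, p.2.1, p.1), fun p => (p.2.2.2, p.2.2.1, p.2.1, p.1),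
    fun _ => rfl, fun _ => rfl⟩

/-- Reversal of a quadruple sum. -/
lemma sum4_rev (g : Fin n → Fin n → Fin n → Fin n → F) :
    (∑ a : Fin n, ∑ b : Fin n, ∑ c : Fin n, ∑ d : Fin n, g a b c d)
      = ∑ a : Fin n, ∑ b : Fin n, ∑ c : Fin n, ∑ d : Fin n, g d c b a := by
  have h1 : (∑ p : Fin n × Fin n × Fin n × Fin n, g p.1 p.2.1 p.2.2.1 p.2.2.2)
      = ∑ a : Fin n, ∑ b : Fin n, ∑ c : Fin n, ∑ d : Fin n, g a b c d := by
    simp [Fintype.sum_prod_type]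
  have h2 : (∑ p : Fin n × Fin n × Fin n × Fin n, g p.2.2.2 p.2.2.1 p.2.1 p.1)
      = ∑ a : Fin n, ∑ b : Fin n, ∑ c : Fin n, ∑ d : Fin n, g d c b a := by
    simp [Fintype.sum_prod_type]
  rw [← h1, ← h2, ← Equiv.sum_comp (rev4 (n := n)) (fun p => g p.1 p.2.1 p.2.2.1 p.2.2.2)]
  rfl

lemma ite_trichotomy (x : F) (a d : Fin n) (P : Prop) [Decidable P] :
    (if P then x else 0)
      = (if P ∧ a < d then x else 0) + (if P ∧ d < a then x else 0)
        + (if P ∧ a = d then x else 0) := by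
  rcases lt_trichotomy a d with h | h | h
  · simp [h, h.ne, lt_asymm h]
  · subst h; simp [lt_irrefl]
  · simp [h, h.ne', lt_asymm h]

/-- The key quadruple-sum identity, given the symmetry `f a b c d = f d c b a`. -/
lemma quad_comb (f : Fin n → Fin n → Fin n → Fin n → F)
    (hf : ∀ a b c d, f a b c d = f d c b a) :
    (∑ a : Fin n, ∑ b : Fin n, ∑ c : Fin n, ∑ d : Fin n, if b < c then f a b c d else 0)
      + (∑ a : Fin n, ∑ b : Fin n, ∑ d : Fin n, if a < d then f a b b d else 0)
    = (∑ a : Fin n, ∑ b : Fin n, ∑ c : Fin n, ∑ d : Fin n, if a < d then f a b c d else 0)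
      + (∑ a : Fin n, ∑ b : Fin n, ∑ c : Fin n, if b < c then f a b c a else 0) := by
  classical
  have h3L : (∑ a : Fin n, ∑ b : Fin n, ∑ d : Fin n, if a < d then f a b b d else 0)
      = ∑ a : Fin n, ∑ b : Fin n, ∑ c : Fin n, ∑ d : Fin n,
          if a < d ∧ b = c then f a b c d else 0 := by
    refine Finset.sum_congr rfl fun a _ => Finset.sum_congr rfl fun b _ => ?_
    have key : ∀ d : Fin n, (∑ c : Fin n, if a < d ∧ b = c then f a b c d else 0)
        = if a < d then f a b b d else 0 := by
      intro d
      by_cases h : a < d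
      · simp only [h, true_and]
        rw [Finset.sum_ite_eq]
        simp
      · simp [h]
    calc (∑ d : Fin n, if a < d then f a b b d else 0)
        = ∑ d : Fin n, ∑ c : Fin n, if a < d ∧ b = c then f a b c d else 0 :=
          Finset.sum_congr rfl fun d _ => (key d).symm
      _ = ∑ c : Fin n, ∑ d : Fin n, if a < d ∧ b = c then f a b c d else 0 :=
          Finset.sum_comm
  have h3R : (∑ a : Fin n, ∑ b : Fin n, ∑ c : Fin n, if b < c then f a b c a else 0)
      = ∑ a : Fin n, ∑ b : Fin n, ∑ c : Fin n, ∑ d : Fin n,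
          if b < c ∧ a = d then f a b c d else 0 := by
    refine Finset.sum_congr rfl fun a _ => Finset.sum_congr rfl fun b _ =>
      Finset.sum_congr rfl fun c _ => ?_
    by_cases h : b < c
    · simp only [h, true_and]
      rw [Finset.sum_ite_eq]
      simp
    · simp [h]
  have s1 : (∑ a : Fin n, ∑ b : Fin n, ∑ c : Fin n, ∑ d : Fin n, if b < c then f a b c d else 0)
      = (∑ a : Fin n, ∑ b : Fin n, ∑ c : Fin n, ∑ d : Fin n, if (b < c) ∧ a < d then f a b c d else 0)
        + (∑ a : Fin n, ∑ b : Fin n, ∑ c : Fin n, ∑ d : Fin n, if (b < c) ∧ d < a then f a b c d else 0)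
        + (∑ a : Fin n, ∑ b : Fin n, ∑ c : Fin n, ∑ d : Fin n, if (b < c) ∧ a = d then f a b c d else 0) := by
    simp only [← Finset.sum_add_distrib]
    exact Finset.sum_congr rfl fun a _ => Finset.sum_congr rfl fun b _ =>
      Finset.sum_congr rfl fun c _ => Finset.sum_congr rfl fun d _ =>
        ite_trichotomy (f a b c d) a d (b < c)
  have s2 : (∑ a : Fin n, ∑ b : Fin n, ∑ c : Fin n, ∑ d : Fin n, if a < d then f a b c d else 0)
      = (∑ a : Fin n, ∑ b : Fin n, ∑ c : Fin n, ∑ d : Fin n, if (a < d) ∧ b < c then f a b c d else 0)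
        + (∑ a : Fin n, ∑ b : Fin n, ∑ c : Fin n, ∑ d : Fin n, if (a < d) ∧ c < b then f a b c d else 0)
        + (∑ a : Fin n, ∑ b : Fin n, ∑ c : Fin n, ∑ d : Fin n, if (a < d) ∧ b = c then f a b c d else 0) := by
    simp only [← Finset.sum_add_distrib]
    exact Finset.sum_congr rfl fun a _ => Finset.sum_congr rfl fun b _ =>
      Finset.sum_congr rfl fun c _ => Finset.sum_congr rfl fun d _ =>
        ite_trichotomy (f a b c d) b c (a < d)
  have comm1 : (∑ a : Fin n, ∑ b : Fin n, ∑ c : Fin n, ∑ d : Fin n, if (b < c) ∧ a < d then f a b c d else 0)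
      = ∑ a : Fin n, ∑ b : Fin n, ∑ c : Fin n, ∑ d : Fin n, if (a < d) ∧ b < c then f a b c d else 0 := by
    exact Finset.sum_congr rfl fun a _ => Finset.sum_congr rfl fun b _ =>
      Finset.sum_congr rfl fun c _ => Finset.sum_congr rfl fun d _ => by
        by_cases h1 : b < c <;> by_cases h2 : a < d <;> simp [h1, h2]
  have rev : (∑ a : Fin n, ∑ b : Fin n, ∑ c : Fin n, ∑ d : Fin n, if (b < c) ∧ d < a then f a b c d else 0)
      = ∑ a : Fin n, ∑ b : Fin n, ∑ c : Fin n, ∑ d : Fin n, if (a < d) ∧ c < b then f a b c d else 0 := by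
    rw [sum4_rev (fun a b c d => if (b < c) ∧ d < a then f a b c d else 0)]
    exact Finset.sum_congr rfl fun a _ => Finset.sum_congr rfl fun b _ =>
      Finset.sum_congr rfl fun c _ => Finset.sum_congr rfl fun d _ => by
        by_cases h1 : c < b <;> by_cases h2 : a < d <;> simp [h1, h2, (hf a b c d).symm]
  rw [h3L, h3R, s1, s2, comm1, rev]
  abel

end Helpers3
/-- the action of `Mₙ(L(ℤ/2))` on `Mₙ(L)(*)` is associative:
`(A·C) • B = A • (C • B)`. -/
theorem matrix_action_assoc {U F : Type} [Ring U] [AddCommGroup F]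
    (L : HermitianMackey U F) (n : ℕ)
    (A C : Matrix (Fin n) (Fin n) U)
    (Boff : Fin n → Fin n → U) (Bdiag : Fin n → F) :
    (∀ i j : Fin n, i < j →
        mActOff L (A * C) Boff Bdiag i j =
          mActOff L A (mActOff L C Boff Bdiag) (mActDiag L C Boff Bdiag) i j) ∧
    (∀ i : Fin n,
        mActDiag L (A * C) Boff Bdiag i =
          mActDiag L A (mActOff L C Boff Bdiag) (mActDiag L C Boff Bdiag) i) := by
  constructor
  · intro i j _
    show ((A * C) * mRest L Boff Bdiag * conjT L (A * C)) i j
        = (A * mRest L (mActOff L C Boff Bdiag) (mActDiag L C Boff Bdiag) * conjT L A) i j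
    rw [restAct, conjT_mul]
    have h : (A * C) * mRest L Boff Bdiag * (conjT L C * conjT L A)
        = A * (C * mRest L Boff Bdiag * conjT L C) * conjT L A := by
      simp only [mul_assoc]
    rw [h]
  · intro i
    show (∑ k : Fin n, ∑ l : Fin n, if k < l then
          L.T ((A * C) i k * mRest L Boff Bdiag k l * L.w ((A * C) i l)) else 0)
        + ∑ k : Fin n, L.act ((A * C) i k) (Bdiag k)
      = (∑ k : Fin n, ∑ l : Fin n, if k < l then
          L.T (A i k * mRest L (mActOff L C Boff Bdiag) (mActDiag L C Boff Bdiag) k l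
            * L.w (A i l)) else 0)
        + ∑ k : Fin n, L.act (A i k) (mActDiag L C Boff Bdiag k)
    -- the quadruple term
    have hf : ∀ a b c d : Fin n,
        L.T (A i a * C a b * mRest L Boff Bdiag b c * L.w (A i d * C d c))
          = L.T (A i d * C d c * mRest L Boff Bdiag c b * L.w (A i a * C a b)) := by
      intro a b c d
      rw [T_flip, mRest_symm]
    -- expand the LHS pair sum
    have EL1 : (∑ k : Fin n, ∑ l : Fin n, if k < l then
          L.T ((A * C) i k * mRest L Boff Bdiag k l * L.w ((A * C) i l)) else 0)
        = ∑ b : Fin n, ∑ c : Fin n, ∑ a : Fin n, ∑ d : Fin n, if b < c then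
            L.T (A i a * C a b * mRest L Boff Bdiag b c * L.w (A i d * C d c)) else 0 := by
      refine Finset.sum_congr rfl fun b _ => Finset.sum_congr rfl fun c _ => ?_
      by_cases h : b < c
      · simp only [h, if_true]
        simp only [Matrix.mul_apply, w_sum, Finset.sum_mul, Finset.mul_sum, T_sum]
        exact Finset.sum_comm
      · simp [h]
    have PermL1 : (∑ b : Fin n, ∑ c : Fin n, ∑ a : Fin n, ∑ d : Fin n, if b < c then
            L.T (A i a * C a b * mRest L Boff Bdiag b c * L.w (A i d * C d c)) else 0)
        = ∑ a : Fin n, ∑ b : Fin n, ∑ c : Fin n, ∑ d : Fin n, if b < c then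
            L.T (A i a * C a b * mRest L Boff Bdiag b c * L.w (A i d * C d c)) else 0 := by
      calc (∑ b : Fin n, ∑ c : Fin n, ∑ a : Fin n, ∑ d : Fin n, if b < c then
            L.T (A i a * C a b * mRest L Boff Bdiag b c * L.w (A i d * C d c)) else 0)
          = ∑ b : Fin n, ∑ a : Fin n, ∑ c : Fin n, ∑ d : Fin n, if b < c then
            L.T (A i a * C a b * mRest L Boff Bdiag b c * L.w (A i d * C d c)) else 0 :=
            Finset.sum_congr rfl fun b _ => Finset.sum_comm
        _ = _ := Finset.sum_comm
    -- expand the LHS act sum via generalized distributivity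
    have EL2 : (∑ k : Fin n, L.act ((A * C) i k) (Bdiag k))
        = (∑ b : Fin n, ∑ a : Fin n, ∑ d : Fin n, if a < d then
            L.T (A i a * C a b * mRest L Boff Bdiag b b * L.w (A i d * C d b)) else 0)
          + ∑ b : Fin n, ∑ a : Fin n, L.act (A i a) (L.act (C a b) (Bdiag b)) := by
      rw [← Finset.sum_add_distrib]
      refine Finset.sum_congr rfl fun b _ => ?_
      rw [Matrix.mul_apply, genDist L Finset.univ (fun m => A i m * C m b) (Bdiag b)]
      rw [add_comm]
      congr 1
      · refine Finset.sum_congr rfl fun a _ => Finset.sum_congr rfl fun d _ => ?_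
        by_cases h : a < d
        · simp only [h, if_true]
          rw [mRest_diag]
        · simp [h]
      · exact Finset.sum_congr rfl fun m _ => by rw [L.act_mul]
    have PermL2a : (∑ b : Fin n, ∑ a : Fin n, ∑ d : Fin n, if a < d then
            L.T (A i a * C a b * mRest L Boff Bdiag b b * L.w (A i d * C d b)) else 0)
        = ∑ a : Fin n, ∑ b : Fin n, ∑ d : Fin n, if a < d then
            L.T (A i a * C a b * mRest L Boff Bdiag b b * L.w (A i d * C d b)) else 0 :=
      Finset.sum_comm
    have PermL2b : (∑ b : Fin n, ∑ a : Fin n, L.act (A i a) (L.act (C a b) (Bdiag b)))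
        = ∑ a : Fin n, ∑ b : Fin n, L.act (A i a) (L.act (C a b) (Bdiag b)) :=
      Finset.sum_comm
    -- expand the RHS pair sum
    have ER1 : (∑ k : Fin n, ∑ l : Fin n, if k < l then
          L.T (A i k * mRest L (mActOff L C Boff Bdiag) (mActDiag L C Boff Bdiag) k l
            * L.w (A i l)) else 0)
        = ∑ a : Fin n, ∑ d : Fin n, ∑ b : Fin n, ∑ c : Fin n, if a < d then
            L.T (A i a * C a b * mRest L Boff Bdiag b c * L.w (A i d * C d c)) else 0 := by
      simp only [restAct]
      refine Finset.sum_congr rfl fun a _ => Finset.sum_congr rfl fun d _ => ?_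
      by_cases h : a < d
      · simp only [h, if_true]
        rw [sandwich_entry]
        simp only [Finset.mul_sum, Finset.sum_mul, T_sum]
        refine Finset.sum_congr rfl fun b _ => Finset.sum_congr rfl fun c _ => ?_
        congr 1
        rw [L.w_mul]
        noncomm_ring
      · simp [h]
    have PermR1 : (∑ a : Fin n, ∑ d : Fin n, ∑ b : Fin n, ∑ c : Fin n, if a < d then
            L.T (A i a * C a b * mRest L Boff Bdiag b c * L.w (A i d * C d c)) else 0)
        = ∑ a : Fin n, ∑ b : Fin n, ∑ c : Fin n, ∑ d : Fin n, if a < d then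
            L.T (A i a * C a b * mRest L Boff Bdiag b c * L.w (A i d * C d c)) else 0 :=
      Finset.sum_congr rfl fun a _ =>
        (Finset.sum_comm.trans (Finset.sum_congr rfl fun b _ => Finset.sum_comm))
    -- expand the RHS act sum
    have ER2 : (∑ k : Fin n, L.act (A i k) (mActDiag L C Boff Bdiag k))
        = (∑ a : Fin n, ∑ b : Fin n, ∑ c : Fin n, if b < c then
            L.T (A i a * C a b * mRest L Boff Bdiag b c * L.w (A i a * C a c)) else 0)
          + ∑ a : Fin n, ∑ b : Fin n, L.act (A i a) (L.act (C a b) (Bdiag b)) := by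
      rw [← Finset.sum_add_distrib]
      refine Finset.sum_congr rfl fun a _ => ?_
      show L.act (A i a) ((∑ b : Fin n, ∑ c : Fin n, if b < c then
            L.T (C a b * mRest L Boff Bdiag b c * L.w (C a c)) else 0)
          + ∑ b : Fin n, L.act (C a b) (Bdiag b)) = _
      rw [L.act_add]
      congr 1
      · simp only [act_sum, apply_ite (L.act (A i a)), act_zero, L.act_T]
        refine Finset.sum_congr rfl fun b _ => Finset.sum_congr rfl fun c _ => ?_
        by_cases h : b < c
        · simp only [h, if_true]
          congr 1
          rw [L.w_mul]
          noncomm_ring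
        · simp [h]
      · exact act_sum L (A i a) Finset.univ (fun b => L.act (C a b) (Bdiag b))
    rw [EL1, PermL1, EL2, PermL2a, PermL2b, ER1, PermR1, ER2]
    rw [← add_assoc, ← add_assoc,
      quad_comb (fun a b c d =>
        L.T (A i a * C a b * mRest L Boff Bdiag b c * L.w (A i d * C d c))) hf]
end
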